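/- Let (K,v) be a spherically complete valued field, f ∈ O[X], and b ∈ O with vf(b) > 2vf'(b). Then there exists a unique root a of f with v(a−b) = vf(b) − vf'(b) > vf'(b). -/

import Mathlib

section Ultrametric

variable {Y Y' : Type*} {Γ Γ' : Type*} [LinearOrder Γ] [OrderTop Γ]
  [LinearOrder Γ'] [OrderTop Γ']

/-- The axioms of an ultrametric space with distance values in `Γ` (with top element `∞`). -/
def IsUltrametric (u : Y → Y → Γ) : Prop :=
  (∀ y z, u y z = ⊤ ↔ y = z) ∧
  (∀ x y z, min (u y x) (u x z) ≤ u y z) ∧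
  (∀ y z, u y z = u z y)

/-- The closed ball of radius `α` around `y`. -/
def closedBall (u : Y → Y → Γ) (α : Γ) (y : Y) : Set Y := {z | α ≤ u y z}

/-- `B(x,y)`, the smallest closed ball containing `x` and `y`. -/
def smallBall (u : Y → Y → Γ) (x y : Y) : Set Y := closedBall u (u x y) x

/-- A ball: a union of a nonempty collection of closed balls having a common element. -/
def IsBall (u : Y → Y → Γ) (S : Set Y) : Prop :=
  ∃ C : Set (Γ × Y), C.Nonempty ∧ (∃ y₀, ∀ p ∈ C, y₀ ∈ closedBall u p.1 p.2) ∧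
    S = ⋃ p ∈ C, closedBall u p.1 p.2

/-- Spherical completeness: every nest of balls has nonempty intersection. -/
def SphericallyComplete (u : Y → Y → Γ) : Prop :=
  ∀ N : Set (Set Y), N.Nonempty → (∀ B ∈ N, IsBall u B) →
    IsChain (· ⊆ ·) N → (⋂₀ N).Nonempty

/-- `z'` is an attractor for `f`. -/
def IsAttractor (u : Y → Y → Γ) (u' : Y' → Y' → Γ') (f : Y → Y') (z' : Y') : Prop :=
  ∀ y : Y, f y ≠ z' → ∃ z : Y,
    u' (f y) z' < u' (f z) z' ∧ f '' smallBall u y z ⊆ smallBall u' (f y) z'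

/-- A map is immediate if every element of the target is an attractor for it. -/
def Immediate (u : Y → Y → Γ) (u' : Y' → Y' → Γ') (f : Y → Y') : Prop :=
  ∀ z' : Y', IsAttractor u u' f z'

end Ultrametric

/-- The axioms of a (Krull) valuation on a field, written additively, with
`v a = ⊤` iff `a = 0`. -/
def IsFieldVal {K : Type*} [Field K] {Γ : Type*} [AddCommGroup Γ] [LinearOrder Γ] [IsOrderedAddMonoid Γ]
    (v : K → WithTop Γ) : Prop :=
  (∀ a, v a = ⊤ ↔ a = 0) ∧ (∀ a b, v (a * b) = v a + v b) ∧
  (∀ a b, min (v a) (v b) ≤ v (a - b))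

namespace NewtonAux

theorem gaux1 {Γ : Type*} [AddCommGroup Γ] [LinearOrder Γ] [IsOrderedAddMonoid Γ] {γ0 ε : Γ} (h : γ0 < ε) :
    ε < ε + (ε + 0) + -γ0 := by
  have h0 : (0:Γ) < ε - γ0 := sub_pos.mpr h
  calc ε = ε + 0 := (add_zero ε).symm
    _ < ε + (ε - γ0) := add_lt_add_right h0 ε
    _ = ε + (ε + 0) + -γ0 := by abel

theorem gaux2 {Γ : Type*} [AddCommGroup Γ] [LinearOrder Γ] [IsOrderedAddMonoid Γ] {γ0 ε : Γ} (h : γ0 < ε) :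
    ε < ε + ε + 0 + -γ0 := by
  have h0 : (0:Γ) < ε - γ0 := sub_pos.mpr h
  calc ε = ε + 0 := (add_zero ε).symm
    _ < ε + (ε - γ0) := add_lt_add_right h0 ε
    _ = ε + ε + 0 + -γ0 := by abel

theorem gaux3 {Γ : Type*} [AddCommGroup Γ] [LinearOrder Γ] [IsOrderedAddMonoid Γ] {γ0 ε m : Γ} (h : γ0 + γ0 < m) :
    ε < m + (ε + 0) + -(γ0 + γ0) := by
  have h0 : (0:Γ) < m - (γ0 + γ0) := sub_pos.mpr h
  calc ε = ε + 0 := (add_zero ε).symm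
    _ < ε + (m - (γ0 + γ0)) := add_lt_add_right h0 ε
    _ = m + (ε + 0) + -(γ0 + γ0) := by abel

end NewtonAux
namespace NewtonAux

open Polynomial

variable {K : Type*} [Field K] {Γ : Type*} [AddCommGroup Γ] [LinearOrder Γ] [IsOrderedAddMonoid Γ]
  {v : K → WithTop Γ} (hv : IsFieldVal v)

include hv

theorem v_zero : v 0 = ⊤ := (hv.1 0).2 rfl

theorem v_ne_top {a : K} (ha : a ≠ 0) : v a ≠ ⊤ := fun h => ha ((hv.1 a).1 h)

theorem v_one : v 1 = 0 := by
  have h := hv.2.1 1 1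
  rw [one_mul] at h
  have ht : v 1 ≠ ⊤ := v_ne_top hv one_ne_zero
  lift v 1 to Γ using ht with g hg
  have h' : g = g + g := by exact_mod_cast h
  have : g + 0 = g + g := by rw [add_zero]; exact h'
  have hg0 : (0:Γ) = g := add_left_cancel this
  exact_mod_cast hg0.symm

theorem v_neg (a : K) : v (-a) = v a := by
  have hm : v (-1 : K) = 0 := by
    have h := hv.2.1 (-1 : K) (-1)
    rw [neg_mul_neg, one_mul, v_one hv] at h
    have ht : v (-1 : K) ≠ ⊤ := v_ne_top hv (by norm_num)
    lift v (-1 : K) to Γ using ht with g hg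
    have h' : g + g = 0 := by exact_mod_cast h.symm
    have hgneg : g = -g := eq_neg_of_add_eq_zero_left h'
    have : g = 0 := by
      rcases lt_trichotomy g 0 with h1 | h1 | h1
      · exact absurd (hgneg ▸ neg_pos.mpr h1) (not_lt.mpr (le_of_lt h1))
      · exact h1
      · exact absurd (hgneg ▸ neg_neg_iff_pos.mpr h1) (not_lt.mpr (le_of_lt h1))
    exact_mod_cast congrArg (fun x : Γ => (x : WithTop Γ)) this
  have := hv.2.1 (-1 : K) a
  rw [neg_one_mul, hm, zero_add] at this
  exact this

theorem v_add (a b : K) : min (v a) (v b) ≤ v (a + b) := by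
  have := hv.2.2 a (-b)
  rwa [v_neg hv, sub_neg_eq_add] at this

theorem v_sub_comm (a b : K) : v (a - b) = v (b - a) := by
  rw [← v_neg hv (a - b), neg_sub]

/-- `v (a + c) = v a` when `v a < v c`. -/
theorem v_add_eq_left {a c : K} (h : v a < v c) : v (a + c) = v a := by
  apply le_antisymm
  · by_contra hlt
    push_neg at hlt
    have h1 : min (v (a+c)) (v c) ≤ v a := by
      have h2 := hv.2.2 (a+c) c
      rwa [add_sub_cancel_right] at h2
    have h3 : v a < min (v (a+c)) (v c) := lt_min hlt h
    exact absurd (lt_of_lt_of_le h3 h1) (lt_irrefl _)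
  · exact le_trans (le_of_eq (min_eq_left (le_of_lt h)).symm) (v_add hv a c)

theorem v_inv {a : K} (ha : a ≠ 0) {α : Γ} (hα : v a = α) : v a⁻¹ = ((-α : Γ) : WithTop Γ) := by
  have h := hv.2.1 a a⁻¹
  rw [mul_inv_cancel₀ ha, v_one hv, hα] at h
  have ht : v a⁻¹ ≠ ⊤ := v_ne_top hv (inv_ne_zero ha)
  lift v a⁻¹ to Γ using ht with g hg
  have h' : α + g = 0 := by exact_mod_cast h.symm
  have : g = -α := eq_neg_of_add_eq_zero_right h'
  exact_mod_cast congrArg (fun x : Γ => (x : WithTop Γ)) this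

theorem v_nat (n : ℕ) : 0 ≤ v (n : K) := by
  induction n with
  | zero => simp [v_zero hv]
  | succ k ih =>
    push_cast
    refine le_trans ?_ (v_add hv (k : K) 1)
    rw [v_one hv]
    exact le_min ih (le_refl _)

theorem v_nonneg_mul {a c : K} (ha : 0 ≤ v a) (hc : 0 ≤ v c) : 0 ≤ v (a * c) := by
  rw [hv.2.1]
  calc (0 : WithTop Γ) = 0 + 0 := by simp
  _ ≤ v a + v c := by gcongr

theorem v_nonneg_pow {a : K} (ha : 0 ≤ v a) (n : ℕ) : 0 ≤ v (a ^ n) := by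
  induction n with
  | zero => simp [pow_zero, v_one hv]
  | succ k ih => rw [pow_succ]; exact v_nonneg_mul hv ih ha

theorem v_nonneg_sum {s : Finset ℕ} {F : ℕ → K} (h : ∀ i ∈ s, 0 ≤ v (F i)) :
    0 ≤ v (∑ i ∈ s, F i) := by
  classical
  induction s using Finset.induction with
  | empty => simp [v_zero hv]
  | insert _ _ hx ih =>
    rename_i a s
    rw [Finset.sum_insert hx]
    refine le_trans (le_min (h a (Finset.mem_insert_self a s))
      (ih fun i hi => h i (Finset.mem_insert_of_mem hi))) (v_add hv _ _)

theorem v_eval_nonneg {p : Polynomial K} (hp : ∀ i, 0 ≤ v (p.coeff i)) {x : K} (hx : 0 ≤ v x) :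
    0 ≤ v (p.eval x) := by
  rw [Polynomial.eval_eq_sum_range]
  exact v_nonneg_sum hv fun i _ => v_nonneg_mul hv (hp i) (v_nonneg_pow hv hx i)

theorem taylor_coeff_nonneg {p : Polynomial K} (hp : ∀ i, 0 ≤ v (p.coeff i))
    {y : K} (hy : 0 ≤ v y) : ∀ i, 0 ≤ v ((taylor y p).coeff i) := by
  intro i
  rw [Polynomial.taylor_coeff]
  refine v_eval_nonneg hv (fun j => ?_) hy
  rw [Polynomial.hasseDeriv_coeff]
  exact v_nonneg_mul hv (v_nat hv _) (hp _)

theorem derivative_coeff_nonneg {p : Polynomial K} (hp : ∀ i, 0 ≤ v (p.coeff i)) :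
    ∀ i, 0 ≤ v ((derivative p).coeff i) := by
  intro i
  rw [Polynomial.coeff_derivative]
  refine v_nonneg_mul hv (hp _) ?_
  have : ((i : K) + 1) = ((i + 1 : ℕ) : K) := by push_cast; ring
  rw [this]; exact v_nat hv _

omit hv

/-- Two-step expansion of polynomial evaluation. -/
theorem eval_expand2 (p : Polynomial K) (s : K) :
    p.eval s = p.coeff 0 + p.coeff 1 * s + s^2 * (p.divX.divX.eval s) := by
  conv_lhs => rw [← divX_mul_X_add p]
  conv_lhs => rw [← divX_mul_X_add p.divX]
  simp only [eval_add, eval_mul, eval_X, eval_C, coeff_divX]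
  ring

/-- Taylor expansion to second order. -/
theorem taylor_expand2 (p : Polynomial K) (y x : K) :
    p.eval x = p.eval y + (derivative p).eval y * (x - y)
      + (x - y)^2 * (((taylor y p).divX.divX).eval (x - y)) := by
  have h := Polynomial.taylor_eval y p (x - y)
  rw [sub_add_cancel] at h
  rw [← h, eval_expand2, taylor_coeff_zero, taylor_coeff_one]

/-- Taylor expansion to first order. -/
theorem taylor_expand1 (p : Polynomial K) (y x : K) :
    p.eval x = p.eval y + (x - y) * (((taylor y p).divX).eval (x - y)) := by
  have h := Polynomial.taylor_eval y p (x - y)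
  rw [sub_add_cancel] at h
  conv_lhs => rw [← h, ← divX_mul_X_add (taylor y p)]
  simp only [eval_add, eval_mul, eval_X, eval_C, taylor_coeff_zero]
  ring

include hv

theorem fixed_point
    (hsc : SphericallyComplete (fun a b : K => v (a - b)))
    (D : Set K) (x₀ : K) (hx₀ : x₀ ∈ D) (g : K → K)
    (hball : ∀ x ∈ D, ∀ z : K, v (x - g x) ≤ v (x - z) → z ∈ D)
    (hcontr : ∀ x ∈ D, ∀ y ∈ D, x ≠ y → v (x - y) < v (g x - g y)) :
    ∃ a ∈ D, g a = a := by
  set u : K → K → WithTop Γ := fun a b => v (a - b) with hu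
  set Bx : K → Set K := fun x => closedBall u (v (x - g x)) x with hBx
  have mem_Bx : ∀ x z : K, z ∈ Bx x ↔ v (x - g x) ≤ v (x - z) := by
    intro x z; rfl
  have hvadd := v_add hv
  have hvsubc := v_sub_comm hv
  have hvzero := v_zero hv
  have utriangle : ∀ x y z : K, min (v (y - x)) (v (x - z)) ≤ v (y - z) := by
    intro x y z
    have h : y - z = (y - x) + (x - z) := by ring
    rw [h]; exact hvadd _ _
  have key : ∀ x ∈ D, ∀ y ∈ Bx x, y ∈ D ∧ Bx y ⊆ Bx x := by
    intro x hx y hy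
    rw [mem_Bx] at hy
    have hyD : y ∈ D := hball x hx y hy
    refine ⟨hyD, ?_⟩
    rcases eq_or_ne x y with rfl | hne
    · exact subset_refl _
    · have hc := hcontr x hx y hyD hne
      have h1 : v (x - g x) ≤ v (x - g y) := by
        have h' : min (v (x - g x)) (v (g x - g y)) ≤ v (x - g y) := by
          have hxy : x - g y = (x - g x) + (g x - g y) := by ring
          rw [hxy]; exact hvadd _ _
        exact le_trans (le_min (le_refl _) (le_trans hy (le_of_lt hc))) h'
      have h2 : v (x - g x) ≤ v (y - g y) := by
        have h' : min (v (y - x)) (v (x - g y)) ≤ v (y - g y) := utriangle _ _ _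
        refine le_trans (le_min ?_ h1) h'
        rw [hvsubc y x]; exact hy
      intro z hz
      rw [mem_Bx] at hz ⊢
      have h' : min (v (x - y)) (v (y - z)) ≤ v (x - z) := utriangle _ _ _
      exact le_trans (le_min hy (le_trans h2 hz)) h'
  have ball_isball : ∀ x : K, IsBall u (Bx x) := by
    intro x
    refine ⟨{(v (x - g x), x)}, Set.singleton_nonempty _, ⟨x, ?_⟩, ?_⟩
    · rintro p rfl
      show v (x - g x) ≤ v (x - x)
      simp [hvzero]
    · rw [Set.biUnion_singleton]
  set P : Set (Set K) := {S | ∃ x ∈ D, S = Bx x} with hP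
  have hchains : ∀ c ⊆ P, IsChain (· ⊆ ·) c → ∃ lb ∈ P, ∀ s ∈ c, lb ⊆ s := by
    intro c hc hchain
    rcases Set.eq_empty_or_nonempty c with rfl | hne
    · exact ⟨Bx x₀, ⟨x₀, hx₀, rfl⟩, by simp⟩
    · have hiball : ∀ B ∈ c, IsBall u B := by
        intro B hB
        obtain ⟨x, _, rfl⟩ := hc hB
        exact ball_isball x
      obtain ⟨z, hz⟩ := hsc c hne hiball hchain
      rw [Set.mem_sInter] at hz
      obtain ⟨B₀, hB₀⟩ := hne
      obtain ⟨x₁, hx₁D, hBeq⟩ := hc hB₀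
      subst hBeq
      have hzD : z ∈ D := (key x₁ hx₁D z (hz _ hB₀)).1
      refine ⟨Bx z, ⟨z, hzD, rfl⟩, ?_⟩
      intro S hS
      obtain ⟨x2, hx2D, hBeq2⟩ := hc hS
      subst hBeq2
      exact (key x2 hx2D z (hz _ hS)).2
  obtain ⟨m, hm⟩ := zorn_superset P hchains
  obtain ⟨x, hxD, hmeq⟩ := hm.1
  subst hmeq
  refine ⟨x, hxD, ?_⟩
  by_contra hne
  have hgx : g x ∈ Bx x := by rw [mem_Bx]
  obtain ⟨hgxD, hsub⟩ := key x hxD (g x) hgx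
  have heq : Bx x ⊆ Bx (g x) := hm.2 ⟨g x, hgxD, rfl⟩ hsub
  have hxmem : x ∈ Bx x := by rw [mem_Bx]; simp [hvzero]
  have hxmem' : x ∈ Bx (g x) := heq hxmem
  rw [mem_Bx] at hxmem'
  have hcx := hcontr x hxD (g x) hgxD (fun h => hne h.symm)
  rw [hvsubc (g x) x] at hxmem'
  exact absurd (lt_of_lt_of_le hcx hxmem') (lt_irrefl _)

end NewtonAux

/-- one-dimensional Newton's Lemma in a spherically complete valued
field: if `vf(b) > 2vf'(b)` then `f` has a unique root `a` with
`v(a − b) = vf(b) − vf'(b) > vf'(b)`. -/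
theorem newtons_lemma {K : Type*} [Field K] {Γ : Type*}
    [AddCommGroup Γ] [LinearOrder Γ] [IsOrderedAddMonoid Γ] (v : K → WithTop Γ) (hv : IsFieldVal v)
    (hsc : SphericallyComplete (fun a b : K => v (a - b)))
    (f : Polynomial K) (hf : ∀ i : ℕ, 0 ≤ v (f.coeff i))
    (b : K) (hb : 0 ≤ v b)
    (hnewton : v (Polynomial.eval b (Polynomial.derivative f)) +
        v (Polynomial.eval b (Polynomial.derivative f)) < v (Polynomial.eval b f)) :
    ∃! a : K, Polynomial.eval a f = 0 ∧
      v (Polynomial.eval b (Polynomial.derivative f)) < v (a - b) ∧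
      v (a - b) + v (Polynomial.eval b (Polynomial.derivative f)) =
        v (Polynomial.eval b f) := by
  classical
  have hvzero := NewtonAux.v_zero hv
  have hvadd := NewtonAux.v_add hv
  have hvsubc := NewtonAux.v_sub_comm hv
  have hvmul := hv.2.1
  have hγt : v (Polynomial.eval b (Polynomial.derivative f)) ≠ ⊤ := by
    intro h
    rw [h] at hnewton
    simp at hnewton
  lift v (Polynomial.eval b (Polynomial.derivative f)) to Γ using hγt with γ0 hγ0
  have hf'b : Polynomial.eval b (Polynomial.derivative f) ≠ 0 := by
    intro h
    rw [h, hvzero] at hγ0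
    exact WithTop.coe_ne_top hγ0
  have hγ0nn : (0:Γ) ≤ γ0 := by
    have h := NewtonAux.v_eval_nonneg hv (NewtonAux.derivative_coeff_nonneg hv hf) hb
    rw [← hγ0] at h
    exact_mod_cast h
  by_cases hfb : Polynomial.eval b f = 0
  · refine ⟨b, ⟨hfb, ?_, ?_⟩, ?_⟩
    · rw [sub_self, hvzero]
      exact WithTop.coe_lt_top γ0
    · rw [sub_self, hvzero, hfb, hvzero, top_add]
    · rintro a' ⟨-, -, h3⟩
      rw [hfb, hvzero] at h3
      have hst : v (a' - b) = ⊤ := by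
        rcases WithTop.add_eq_top.mp h3 with h | h
        · exact h
        · exact absurd h (WithTop.coe_ne_top)
      exact sub_eq_zero.mp ((hv.1 _).1 hst)
  · -- main case
    have hmt : v (Polynomial.eval b f) ≠ ⊤ := NewtonAux.v_ne_top hv hfb
    lift v (Polynomial.eval b f) to Γ using hmt with m hm
    have h2γ : γ0 + γ0 < m := by exact_mod_cast hnewton
    set δ : Γ := m - γ0 with hδdef
    have hγδ : γ0 < δ := lt_sub_iff_add_lt.mpr h2γ
    have hmδ : γ0 + δ = m := by rw [hδdef]; abel
    have hδ0 : (0:Γ) ≤ δ := le_of_lt (lt_of_le_of_lt hγ0nn hγδ)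
    set D : Set K := {x | (↑δ : WithTop Γ) ≤ v (x - b)} with hDdef
    have hbD : b ∈ D := by
      show (↑δ : WithTop Γ) ≤ v (b - b)
      rw [sub_self, hvzero]; exact le_top
    have hDsub : ∀ x ∈ D, (0:WithTop Γ) ≤ v (x - b) := fun x hx =>
      le_trans (by exact_mod_cast hδ0) hx
    have hxint : ∀ x ∈ D, (0:WithTop Γ) ≤ v x := by
      intro x hx
      have h := hvadd (x - b) b
      rw [sub_add_cancel] at h
      exact le_trans (le_min (hDsub x hx) hb) h
    have hQev : ∀ y ∈ D, ∀ s : K, 0 ≤ v s →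
        0 ≤ v (((Polynomial.taylor y f).divX.divX).eval s) := by
      intro y hy s hs
      refine NewtonAux.v_eval_nonneg hv (fun i => ?_) hs
      rw [Polynomial.coeff_divX, Polynomial.coeff_divX]
      exact NewtonAux.taylor_coeff_nonneg hv hf (hxint y hy) _
    have hEev : ∀ y ∈ D, ∀ s : K, 0 ≤ v s →
        0 ≤ v (((Polynomial.taylor y (Polynomial.derivative f)).divX).eval s) := by
      intro y hy s hs
      refine NewtonAux.v_eval_nonneg hv (fun i => ?_) hs
      rw [Polynomial.coeff_divX]
      exact NewtonAux.taylor_coeff_nonneg hv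
        (NewtonAux.derivative_coeff_nonneg hv hf) (hxint y hy) _
    have hDdiff : ∀ x ∈ D, ∀ y ∈ D, (↑δ : WithTop Γ) ≤ v (x - y) := by
      intro x hx y hy
      have h : x - y = (x - b) - (y - b) := by ring
      rw [h]
      exact le_trans (le_min hx hy) (hv.2.2 _ _)
    have hf'x : ∀ x ∈ D, v (Polynomial.eval x (Polynomial.derivative f)) = ↑γ0 := by
      intro x hx
      have hexp := NewtonAux.taylor_expand1 (Polynomial.derivative f) b x
      have hlt : v (Polynomial.eval b (Polynomial.derivative f)) <
          v ((x - b) * ((Polynomial.taylor b (Polynomial.derivative f)).divX.eval (x - b))) := by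
        rw [hvmul, ← hγ0]
        have h2 : (0:WithTop Γ) ≤ v ((Polynomial.taylor b (Polynomial.derivative f)).divX.eval (x - b)) :=
          hEev b hbD _ (hDsub x hx)
        calc (↑γ0 : WithTop Γ) < ↑δ := by exact_mod_cast hγδ
          _ = ↑δ + 0 := (add_zero _).symm
          _ ≤ v (x - b) + v ((Polynomial.taylor b (Polynomial.derivative f)).divX.eval (x - b)) := by
              gcongr
              exact hx
      rw [hexp, NewtonAux.v_add_eq_left hv hlt, ← hγ0]
    have hf'xne : ∀ x ∈ D, Polynomial.eval x (Polynomial.derivative f) ≠ 0 := by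
      intro x hx h
      have h2 := hf'x x hx
      rw [h, hvzero] at h2
      exact WithTop.top_ne_coe h2
    have hfx : ∀ x ∈ D, (↑m : WithTop Γ) ≤ v (Polynomial.eval x f) := by
      intro x hx
      have hexp := NewtonAux.taylor_expand2 f b x
      rw [hexp]
      set Q := ((Polynomial.taylor b f).divX.divX).eval (x - b) with hQdef
      have t1 : (↑m : WithTop Γ) ≤ v (Polynomial.eval b f) := le_of_eq hm
      have t2 : (↑m : WithTop Γ) ≤ v (Polynomial.eval b (Polynomial.derivative f) * (x - b)) := by
        rw [hvmul, ← hγ0, ← hmδ, WithTop.coe_add]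
        gcongr
        exact hx
      have t3 : (↑m : WithTop Γ) ≤ v ((x - b)^2 * Q) := by
        rw [hvmul, sq, hvmul]
        have hlow : (↑m : WithTop Γ) ≤ ↑δ + ↑δ + 0 := by
          rw [add_zero, ← WithTop.coe_add, WithTop.coe_le_coe, ← hmδ]
          exact add_le_add_left (le_of_lt hγδ) δ
        refine le_trans hlow ?_
        gcongr
        · exact hx
        · exact hx
        · exact hQev b hbD _ (hDsub x hx)
      refine le_trans (le_min (le_trans (le_min t1 t2) (hvadd _ _)) t3) (hvadd _ _)
    set g : K → K := fun x => x - Polynomial.eval x f / Polynomial.eval x (Polynomial.derivative f) with hgdef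
    have hxsubg : ∀ x : K, x - g x = Polynomial.eval x f / Polynomial.eval x (Polynomial.derivative f) := by
      intro x; simp [hgdef]
    have hstep : ∀ x ∈ D, (↑δ : WithTop Γ) ≤ v (x - g x) := by
      intro x hx
      rw [hxsubg, div_eq_mul_inv, hvmul, NewtonAux.v_inv hv (hf'xne x hx) (hf'x x hx)]
      have hδm : (↑δ : WithTop Γ) = ↑m + ↑(-γ0) := by
        rw [← WithTop.coe_add]
        exact_mod_cast congrArg (fun x : Γ => (x : WithTop Γ)) (by rw [hδdef]; abel)
      rw [hδm]
      gcongr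
      exact hfx x hx
    have hball : ∀ x ∈ D, ∀ z : K, v (x - g x) ≤ v (x - z) → z ∈ D := by
      intro x hx z hz
      show (↑δ : WithTop Γ) ≤ v (z - b)
      have h : z - b = (z - x) + (x - b) := by ring
      rw [h]
      refine le_trans (le_min ?_ hx) (hvadd _ _)
      rw [hvsubc z x]
      exact le_trans (hstep x hx) hz
    have hcontr : ∀ x ∈ D, ∀ y ∈ D, x ≠ y → v (x - y) < v (g x - g y) := by
      intro x hx y hy hne
      have hxyne : x - y ≠ 0 := sub_ne_zero.mpr hne
      obtain ⟨ε, hε⟩ := WithTop.ne_top_iff_exists.mp (NewtonAux.v_ne_top hv hxyne)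
      have hδε : δ ≤ ε := by
        have h := hDdiff x hx y hy
        rw [← hε] at h
        exact_mod_cast h
      have hγε : γ0 < ε := lt_of_lt_of_le hγδ hδε
      have hxy0 : (0:WithTop Γ) ≤ v (x - y) :=
        le_trans (by exact_mod_cast hδ0) (hDdiff x hx y hy)
      set A := Polynomial.eval x (Polynomial.derivative f) with hA
      set B := Polynomial.eval y (Polynomial.derivative f) with hB
      set Q := ((Polynomial.taylor y f).divX.divX).eval (x - y) with hQ
      set E := ((Polynomial.taylor y (Polynomial.derivative f)).divX).eval (x - y) with hE
      have hvA : v A = ↑γ0 := hf'x x hx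
      have hvB : v B = ↑γ0 := hf'x y hy
      have hAne : A ≠ 0 := hf'xne x hx
      have hBne : B ≠ 0 := hf'xne y hy
      have hQv : (0:WithTop Γ) ≤ v Q := hQev y hy _ hxy0
      have hEv : (0:WithTop Γ) ≤ v E := hEev y hy _ hxy0
      have hfyv : (↑m : WithTop Γ) ≤ v (Polynomial.eval y f) := hfx y hy
      have hABdiff : A - B = (x - y) * E := by
        have h := NewtonAux.taylor_expand1 (Polynomial.derivative f) y x
        rw [hA, hB, hE, h]; ring
      have hfxy : Polynomial.eval x f = Polynomial.eval y f + B * (x - y) + (x - y)^2 * Q := by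
        rw [hB, hQ]
        exact NewtonAux.taylor_expand2 f y x
      have hid : g x - g y = (x - y) * (A - B) / A - (x - y)^2 * Q / A
          + Polynomial.eval y f * (A - B) / (A * B) := by
        have hgx : g x = x - Polynomial.eval x f / A := rfl
        have hgy : g y = y - Polynomial.eval y f / B := rfl
        rw [hgx, hgy, hfxy]
        field_simp
        ring
      have hvAB : v (A * B) = ↑(γ0 + γ0) := by
        rw [hvmul, hvA, hvB, WithTop.coe_add]
      have hT1 : (↑ε : WithTop Γ) < v ((x - y) * (A - B) / A) := by
        rw [div_eq_mul_inv, hABdiff, hvmul, hvmul, hvmul,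
          NewtonAux.v_inv hv hAne hvA, ← hε]
        refine lt_of_lt_of_le
          (show (↑ε : WithTop Γ) < ↑(ε + (ε + 0) + -γ0) by
            exact_mod_cast NewtonAux.gaux1 hγε) ?_
        push_cast
        gcongr
      have hT2 : (↑ε : WithTop Γ) < v ((x - y)^2 * Q / A) := by
        rw [div_eq_mul_inv, sq, hvmul, hvmul, hvmul,
          NewtonAux.v_inv hv hAne hvA, ← hε]
        refine lt_of_lt_of_le
          (show (↑ε : WithTop Γ) < ↑(ε + ε + 0 + -γ0) by
            exact_mod_cast NewtonAux.gaux2 hγε) ?_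
        push_cast
        gcongr
      have hT3 : (↑ε : WithTop Γ) < v (Polynomial.eval y f * (A - B) / (A * B)) := by
        rw [div_eq_mul_inv, hABdiff, hvmul, hvmul, hvmul,
          NewtonAux.v_inv hv (mul_ne_zero hAne hBne) hvAB, ← hε]
        refine lt_of_lt_of_le
          (show (↑ε : WithTop Γ) < ↑(m + (ε + 0) + -(γ0 + γ0)) by
            exact_mod_cast NewtonAux.gaux3 h2γ) ?_
        push_cast
        gcongr
      rw [hid, ← hε]
      have hcomb : min (min (v ((x - y) * (A - B) / A)) (v ((x - y)^2 * Q / A)))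
          (v (Polynomial.eval y f * (A - B) / (A * B)))
          ≤ v ((x - y) * (A - B) / A - (x - y)^2 * Q / A
            + Polynomial.eval y f * (A - B) / (A * B)) :=
        le_trans (min_le_min (hv.2.2 _ _) (le_refl _)) (hvadd _ _)
      exact lt_of_lt_of_le (lt_min (lt_min hT1 hT2) hT3) hcomb
    obtain ⟨a, haD, hga⟩ := NewtonAux.fixed_point hv hsc D b hbD g hball hcontr
    have hroot : Polynomial.eval a f = 0 := by
      have h := hxsubg a
      rw [hga, sub_self] at h
      exact (div_eq_zero_iff.mp h.symm).resolve_right (hf'xne a haD)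
    have habne : a ≠ b := fun h => hfb (h ▸ hroot)
    obtain ⟨ε, hε⟩ := WithTop.ne_top_iff_exists.mp
      (NewtonAux.v_ne_top hv (sub_ne_zero.mpr habne))
    have hδε : δ ≤ ε := by
      have h : (↑δ : WithTop Γ) ≤ v (a - b) := haD
      rw [← hε] at h
      exact_mod_cast h
    have hεδ : ε = δ := by
      set Qb := ((Polynomial.taylor b f).divX.divX).eval (a - b) with hQbdef
      have hexp := NewtonAux.taylor_expand2 f b a
      rw [hroot] at hexp
      have hkey : Polynomial.eval b (Polynomial.derivative f) * (a - b)
          = -(Polynomial.eval b f + (a - b)^2 * Qb) := by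
        rw [hQbdef]
        linear_combination -hexp
      have hQbv : (0:WithTop Γ) ≤ v Qb := hQev b hbD _ (hDsub a haD)
      have hlt : v (Polynomial.eval b f) < v ((a - b)^2 * Qb) := by
        rw [← hm, sq, hvmul, hvmul, ← hε]
        have hmlt : m < ε + ε + 0 := by
          rw [add_zero, ← hmδ]
          exact add_lt_add_of_lt_of_le (lt_of_lt_of_le hγδ hδε) hδε
        refine lt_of_lt_of_le
          (show (↑m : WithTop Γ) < ↑(ε + ε + 0) by exact_mod_cast hmlt) ?_
        push_cast
        gcongr
      have hv1 : v (Polynomial.eval b (Polynomial.derivative f) * (a - b)) = ↑(γ0 + ε) := by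
        rw [hvmul, ← hγ0, ← hε, WithTop.coe_add]
      have hv2 : v (-(Polynomial.eval b f + (a - b)^2 * Qb)) = ↑m := by
        rw [NewtonAux.v_neg hv, NewtonAux.v_add_eq_left hv hlt, ← hm]
      have heq : (↑(γ0 + ε) : WithTop Γ) = ↑m := by
        rw [← hv1, hkey, hv2]
      have h' : γ0 + ε = m := by exact_mod_cast heq
      have h'' : γ0 + ε = γ0 + δ := by rw [h', ← hmδ]
      exact add_left_cancel h''
    refine ⟨a, ⟨hroot, ?_, ?_⟩, ?_⟩
    · rw [← hε]
      exact_mod_cast lt_of_lt_of_le hγδ (le_of_eq hεδ.symm)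
    · rw [← hε, ← WithTop.coe_add]
      exact_mod_cast congrArg (fun x : Γ => (x : WithTop Γ))
        (by rw [hεδ, add_comm]; exact hmδ)
    · rintro a' ⟨h1', h2', h3'⟩
      have ht' : v (a' - b) ≠ ⊤ := by
        intro h
        rw [h, top_add] at h3'
        exact WithTop.top_ne_coe h3'
      obtain ⟨ε', hε'⟩ := WithTop.ne_top_iff_exists.mp ht'
      have h'' : ε' + γ0 = m := by
        rw [← hε'] at h3'
        exact_mod_cast h3'
      have hε'δ : ε' = δ := by
        have : ε' + γ0 = δ + γ0 := by rw [h'', ← hmδ, add_comm]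
        exact add_right_cancel this
      have ha'D : a' ∈ D := by
        show (↑δ : WithTop Γ) ≤ v (a' - b)
        rw [← hε', hε'δ]
      have hga' : g a' = a' := by
        have h := hxsubg a'
        rw [h1', zero_div] at h
        exact (sub_eq_zero.mp h).symm
      by_contra hne'
      have hc := hcontr a' ha'D a haD hne'
      rw [hga', hga] at hc
      exact absurd hc (lt_irrefl _)
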